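/- If the two strict linear orders ≻_1 and ≻_2 over a finite set O are exactly opposite (o ≻_1 o' iff o' ≻_2 o), then the RC rule returns: the unique middle-ranked outcome when |O| is odd, and the two middle-ranked outcomes when |O| is even. -/
import Mathlib


def IsTopSet {α : Type*} (O : Finset α) (r : α → ℕ) (v : ℕ) (B : Finset α) : Prop :=
  B ⊆ O ∧ B.card = v ∧ ∀ a ∈ B, ∀ b ∈ O, b ∉ B → r b < r a

namespace RCaux

variable {α : Type*} [DecidableEq α]

/-- number of elements of `O` strictly below `o` according to `r` -/
def rk (O : Finset α) (r : α → ℕ) (o : α) : ℕ := (O.filter (fun x => r x < r o)).card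

lemma rk_lt (O : Finset α) (r : α → ℕ) {o : α} (ho : o ∈ O) : rk O r o < O.card := by
  have hsub : O.filter (fun x => r x < r o) ⊆ O.erase o := by
    intro x hx
    rw [Finset.mem_filter] at hx
    refine Finset.mem_erase.2 ⟨?_, hx.1⟩
    rintro rfl
    exact lt_irrefl _ hx.2
  calc rk O r o ≤ (O.erase o).card := Finset.card_le_card hsub
    _ < O.card := Finset.card_erase_lt_of_mem ho

lemma rk_lt_rk (O : Finset α) (r : α → ℕ) {a b : α} (ha : a ∈ O)
    (hab : r a < r b) : rk O r a < rk O r b := by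
  apply Finset.card_lt_card
  constructor
  · intro x hx
    rw [Finset.mem_filter] at hx ⊢
    exact ⟨hx.1, lt_trans hx.2 hab⟩
  · intro hsup
    have : a ∈ O.filter (fun x => r x < r a) := hsup (Finset.mem_filter.2 ⟨ha, hab⟩)
    rw [Finset.mem_filter] at this
    exact lt_irrefl _ this.2

lemma rk_injOn (O : Finset α) (r : α → ℕ) (h : Set.InjOn r O) :
    Set.InjOn (rk O r) O := by
  intro a ha b hb hab
  by_contra hne
  have hrne : r a ≠ r b := fun he => hne (h ha hb he)
  rcases lt_or_gt_of_ne hrne with hlt | hlt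
  · exact absurd hab (Nat.ne_of_lt (rk_lt_rk O r ha hlt))
  · exact absurd hab.symm (Nat.ne_of_lt (rk_lt_rk O r hb hlt))

lemma rk_image (O : Finset α) (r : α → ℕ) (h : Set.InjOn r O) :
    O.image (rk O r) = Finset.range O.card := by
  apply Finset.eq_of_subset_of_card_le
  · intro k hk
    obtain ⟨o, ho, rfl⟩ := Finset.mem_image.1 hk
    exact Finset.mem_range.2 (rk_lt O r ho)
  · rw [Finset.card_range, Finset.card_image_of_injOn (rk_injOn O r h)]

lemma card_filter_rk_le (O : Finset α) (r : α → ℕ) (h : Set.InjOn r O) (w : ℕ) :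
    (O.filter (fun o => w ≤ rk O r o)).card = O.card - w := by
  have h1 : (O.filter (fun o => w ≤ rk O r o)).card
      = ((O.filter (fun o => w ≤ rk O r o)).image (rk O r)).card := by
    rw [Finset.card_image_of_injOn
      ((rk_injOn O r h).mono (by exact_mod_cast Finset.filter_subset _ O))]
  have h2 : (O.filter (fun o => w ≤ rk O r o)).image (rk O r)
      = (O.image (rk O r)).filter (fun k => w ≤ k) := by
    ext k
    simp only [Finset.mem_image, Finset.mem_filter]
    constructor
    · rintro ⟨o, ⟨hoO, hle⟩, rfl⟩
      exact ⟨⟨o, hoO, rfl⟩, hle⟩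
    · rintro ⟨⟨o, hoO, rfl⟩, hle⟩
      exact ⟨o, ⟨hoO, hle⟩, rfl⟩
  rw [h1, h2, rk_image O r h]
  have h3 : (Finset.range O.card).filter (fun k => w ≤ k) = Finset.Ico w O.card := by
    ext k
    simp only [Finset.mem_filter, Finset.mem_range, Finset.mem_Ico]
    omega
  rw [h3, Nat.card_Ico]

lemma topset_eq (O : Finset α) (r : α → ℕ) (h : Set.InjOn r O) {v : ℕ} {B : Finset α}
    (hB : IsTopSet O r v B) :
    B = O.filter (fun o => O.card - v ≤ rk O r o) := by
  obtain ⟨hsub, hcard, htop⟩ := hB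
  apply Finset.eq_of_subset_of_card_le
  · intro o ho
    refine Finset.mem_filter.2 ⟨hsub ho, ?_⟩
    have hsd : O \ B ⊆ O.filter (fun x => r x < r o) := by
      intro x hx
      rw [Finset.mem_sdiff] at hx
      exact Finset.mem_filter.2 ⟨hx.1, htop o ho x hx.1 hx.2⟩
    have := Finset.card_le_card hsd
    rwa [Finset.card_sdiff_of_subset hsub, hcard] at this
  · have hvm : v ≤ O.card := hcard ▸ Finset.card_le_card hsub
    rw [card_filter_rk_le O r h, hcard]
    omega

lemma rk_opp (O : Finset α) (r1 r2 : α → ℕ) (h1 : Set.InjOn r1 O)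
    (hopp : ∀ o ∈ O, ∀ o' ∈ O, (r1 o < r1 o' ↔ r2 o' < r2 o)) {o : α} (ho : o ∈ O) :
    rk O r2 o = O.card - 1 - rk O r1 o := by
  have he : O.filter (fun x => r2 x < r2 o) = O.filter (fun x => r1 o < r1 x) :=
    Finset.filter_congr (fun x hx => ((hopp o ho x hx)).symm)
  have hcompl : O.filter (fun x => ¬ r1 x < r1 o)
      = insert o (O.filter (fun x => r1 o < r1 x)) := by
    ext x
    simp only [Finset.mem_filter, Finset.mem_insert, not_lt]
    constructor
    · rintro ⟨hxO, hle⟩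
      rcases lt_or_eq_of_le hle with hlt | heq
      · exact Or.inr ⟨hxO, hlt⟩
      · exact Or.inl (h1 hxO ho heq.symm)
    · rintro (rfl | ⟨hxO, hlt⟩)
      · exact ⟨ho, le_refl _⟩
      · exact ⟨hxO, le_of_lt hlt⟩
  have hnotmem : o ∉ O.filter (fun x => r1 o < r1 x) := by
    simp only [Finset.mem_filter]
    rintro ⟨-, hlt⟩
    exact lt_irrefl _ hlt
  have hadd := Finset.card_filter_add_card_filter_not
    (s := O) (p := fun x => r1 x < r1 o)
  have hins : (O.filter (fun x => ¬ r1 x < r1 o)).card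
      = (O.filter (fun x => r1 o < r1 x)).card + 1 := by
    rw [hcompl, Finset.card_insert_of_notMem hnotmem]
  unfold rk
  rw [he]
  unfold rk at hadd
  omega

end RCaux

theorem rc_opposite_orders_middle {α : Type*} [DecidableEq α]
    (O : Finset α) (hO : O.Nonempty) (r1 r2 : α → ℕ)
    (h1 : Set.InjOn r1 O) (h2 : Set.InjOn r2 O)
    (hopp : ∀ o ∈ O, ∀ o' ∈ O, (r1 o < r1 o' ↔ r2 o' < r2 o)) :
    ∃ v : ℕ,
      (∀ v' < v, ∀ C1 C2 : Finset α, IsTopSet O r1 v' C1 → IsTopSet O r2 v' C2 →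
        C1 ∩ C2 = ∅) ∧
      (∀ B1 B2 : Finset α, IsTopSet O r1 v B1 → IsTopSet O r2 v B2 →
        (B1 ∩ B2).Nonempty ∧
        B1 ∩ B2 = O.filter (fun o =>
          (O.card - 1) / 2 ≤ (O.filter (fun x => r1 x < r1 o)).card ∧
          (O.filter (fun x => r1 x < r1 o)).card ≤ O.card / 2)) := by
  classical
  set m := O.card with hm
  have hm1 : 1 ≤ m := Finset.card_pos.2 hO
  have hopp2 : ∀ o ∈ O, ∀ o' ∈ O, (r2 o < r2 o' ↔ r1 o' < r1 o) := by
    intro o ho o' ho'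
    exact (hopp o' ho' o ho).symm
  refine ⟨m / 2 + 1, ?_, ?_⟩
  · -- empty intersections for small v'
    intro v' hv' C1 C2 hC1 hC2
    rw [Finset.eq_empty_iff_forall_notMem]
    intro x hx
    rw [Finset.mem_inter] at hx
    have e1 := RCaux.topset_eq O r1 h1 hC1
    have e2 := RCaux.topset_eq O r2 h2 hC2
    rw [e1, Finset.mem_filter] at hx
    have hx2 := hx.2
    rw [e2, Finset.mem_filter] at hx2
    obtain ⟨hxO, ha⟩ := hx.1
    obtain ⟨-, hb⟩ := hx2
    rw [RCaux.rk_opp O r1 r2 h1 hopp hxO] at hb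
    have hrk : RCaux.rk O r1 x < m := RCaux.rk_lt O r1 hxO
    omega
  · intro B1 B2 hB1 hB2
    set v := m / 2 + 1 with hv
    have e1 := RCaux.topset_eq O r1 h1 hB1
    have e2 := RCaux.topset_eq O r2 h2 hB2
    have hinter : B1 ∩ B2 = O.filter (fun o =>
        (m - 1) / 2 ≤ RCaux.rk O r1 o ∧ RCaux.rk O r1 o ≤ m / 2) := by
      rw [e1, e2, ← Finset.filter_and]
      apply Finset.filter_congr
      intro o ho
      rw [RCaux.rk_opp O r1 r2 h1 hopp ho]
      have hrk : RCaux.rk O r1 o < m := RCaux.rk_lt O r1 ho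
      omega
    have hinter' : B1 ∩ B2 = O.filter (fun o =>
        (O.card - 1) / 2 ≤ (O.filter (fun x => r1 x < r1 o)).card ∧
        (O.filter (fun x => r1 x < r1 o)).card ≤ O.card / 2) := hinter
    refine ⟨?_, hinter'⟩
    -- nonemptiness: some element has rank m / 2
    have hmem : m / 2 ∈ O.image (RCaux.rk O r1) := by
      rw [RCaux.rk_image O r1 h1, Finset.mem_range]
      omega
    obtain ⟨o, ho, hro⟩ := Finset.mem_image.1 hmem
    refine ⟨o, ?_⟩
    rw [hinter, Finset.mem_filter, hro]
    exact ⟨ho, by omega, le_refl _⟩
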